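/- The singular simplicial set functor Sing : Cpx → sSet, defined by Sing(K)_n = Hom_Cpx(Δⁿ, K), is fully faithful. -/

import Mathlib

/-- An (abstract) simplicial complex: a vertex type together with a collection of
finite subsets (faces) closed under taking subsets, containing all singletons
(so every vertex is a face) and the empty set. -/
structure Cpx : Type 1 where
  V : Type
  faces : Set (Set V)
  finite_mem : ∀ σ ∈ faces, σ.Finite
  down : ∀ σ ∈ faces, ∀ τ ⊆ σ, τ ∈ faces
  vert : ∀ x : V, ({x} : Set V) ∈ faces
  empty_mem : (∅ : Set V) ∈ faces

/-- A map of simplicial complexes: a vertex function sending faces to faces. -/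
structure CpxHom (K L : Cpx) where
  f : K.V → L.V
  map_face : ∀ σ ∈ K.faces, f '' σ ∈ L.faces

theorem CpxHom.ext' {K L : Cpx} {a b : CpxHom K L} (h : a.f = b.f) : a = b := by
  cases a; cases b; cases h; rfl

/-- Composition of maps of simplicial complexes. -/
def CpxHom.comp {K L M : Cpx} (g : CpxHom L M) (h : CpxHom K L) : CpxHom K M where
  f := g.f ∘ h.f
  map_face := fun σ hσ => by
    rw [Set.image_comp]
    exact g.map_face _ (h.map_face _ hσ)

/-- The full simplex `Δⁿ` on vertices `{0, …, n}`: every subset is a face. -/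
abbrev simplexCpx (n : ℕ) : Cpx where
  V := Fin (n + 1)
  faces := {σ | σ.Finite}
  finite_mem := fun _ h => h
  down := fun _ hσ _ hτ => hσ.subset hτ
  vert := fun x => Set.finite_singleton x
  empty_mem := Set.finite_empty

/-- The map of simplices induced by a vertex function. -/
def simplexHom {m n : ℕ} (g : Fin (m + 1) → Fin (n + 1)) :
    CpxHom (simplexCpx m) (simplexCpx n) where
  f := g
  map_face := fun σ hσ => hσ.image g
/-- A map of the singular simplicial sets `Sing K → Sing L`: a family of maps on
`n`-simplices (maps `Δⁿ → K`), natural with respect to all monotone vertex maps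
between simplices. -/
structure SingMap (K L : Cpx) where
  app : ∀ n : ℕ, CpxHom (simplexCpx n) K → CpxHom (simplexCpx n) L
  naturality : ∀ (m n : ℕ) (g : Fin (m + 1) → Fin (n + 1)), Monotone g →
    ∀ σ : CpxHom (simplexCpx n) K,
      app m (σ.comp (simplexHom g)) = (app n σ).comp (simplexHom g)

/-- The map of singular simplicial sets induced by a map of simplicial complexes. -/
def singMapOf {K L : Cpx} (f : CpxHom K L) : SingMap K L where
  app := fun _ σ => f.comp σ
  naturality := fun _ _ _ _ _ => rfl

/-- The constant map `Δⁿ → K` at a vertex `v`. -/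
def constHom (K : Cpx) (n : ℕ) (v : K.V) : CpxHom (simplexCpx n) K where
  f := fun _ => v
  map_face := fun σ _ => K.down {v} (K.vert v) _ (by
    rintro _ ⟨x, _, rfl⟩; rfl)

theorem SingMap.key {K L : Cpx} (F : SingMap K L) (n : ℕ)
    (σ : CpxHom (simplexCpx n) K) (i : Fin (n + 1)) :
    (F.app n σ).f i = (F.app 0 (constHom K 0 (σ.f i))).f 0 := by
  have h := F.naturality 0 n (fun _ => i) monotone_const σ
  have h2 : σ.comp (simplexHom (fun _ => i)) = constHom K 0 (σ.f i) :=
    CpxHom.ext' rfl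
  rw [h2] at h
  exact (congrArg (fun g : CpxHom (simplexCpx 0) L => CpxHom.f g 0) h).symm

/-- The singular simplicial set functor `Sing : Cpx → sSet` is fully faithful:
maps of simplicial complexes `K → L` correspond bijectively to maps of simplicial
sets `Sing K → Sing L`. -/
theorem sing_fullyFaithful (K L : Cpx) :
    Function.Bijective (fun f : CpxHom K L => singMapOf f) := by
  constructor
  · intro a b h
    apply CpxHom.ext'
    funext x
    have := congrArg (fun F => (F.app 0 (constHom K 0 x)).f 0) h
    exact this
  · intro F
    set f0 : K.V → L.V := fun x => (F.app 0 (constHom K 0 x)).f 0 with hf0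
    have hface : ∀ σ ∈ K.faces, f0 '' σ ∈ L.faces := by
      intro σ hσ
      rcases σ.eq_empty_or_nonempty with rfl | hne
      · simpa using L.empty_mem
      · have hfin := K.finite_mem σ hσ
        -- enumerate σ by a surjection from Fin (n+1)
        have hcard : hfin.toFinset.Nonempty := by
          simpa [Set.Finite.toFinset] using hne
        obtain ⟨n, hn⟩ : ∃ n, hfin.toFinset.card = n + 1 :=
          ⟨hfin.toFinset.card - 1, (Nat.succ_pred_eq_of_pos (Finset.card_pos.mpr hcard)).symm⟩
        let e : Fin (n + 1) → K.V := fun i =>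
          (hfin.toFinset.equivFin.symm (Fin.cast hn.symm i)).1
        have hrange : Set.range e = σ := by
          ext x
          constructor
          · rintro ⟨i, rfl⟩
            have := (hfin.toFinset.equivFin.symm (Fin.cast hn.symm i)).2
            simpa using (hfin.mem_toFinset.mp this)
          · intro hx
            refine ⟨Fin.cast hn (hfin.toFinset.equivFin ⟨x, hfin.mem_toFinset.mpr hx⟩), ?_⟩
            simp [e]
        let τ : CpxHom (simplexCpx n) K :=
          ⟨e, fun s _ => K.down σ hσ _ (by
            rintro _ ⟨i, _, rfl⟩
            rw [← hrange]; exact ⟨i, rfl⟩)⟩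
        have h1 : (F.app n τ).f '' Set.univ ∈ L.faces :=
          (F.app n τ).map_face Set.univ (Set.finite_univ)
        have h2 : (F.app n τ).f '' Set.univ = f0 '' σ := by
          rw [← hrange]
          ext y
          simp only [Set.image_univ, Set.mem_range, Set.mem_image]
          constructor
          · rintro ⟨i, rfl⟩
            exact ⟨e i, ⟨i, rfl⟩, (F.key n τ i).symm⟩
          · rintro ⟨x, ⟨i, rfl⟩, rfl⟩
            exact ⟨i, F.key n τ i⟩
        rwa [h2] at h1
    refine ⟨⟨f0, hface⟩, ?_⟩
    cases F with
    | mk app nat =>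
      simp only [singMapOf]
      congr 1
      funext n σ
      apply CpxHom.ext'
      funext i
      exact (SingMap.key ⟨app, nat⟩ n σ i).symm
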